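/- Every subgroup of G of index 4 (equivalently, of order 40) contains the element α⁴, hence contains the commutator subgroup [G,G] = ⟨α⁴⟩, and is therefore a normal subgroup of G. -/

import Mathlib

open scoped commutatorElement

/-- In the group `G = ⟨α, β ∣ α⁴⁰ = β⁴ = 1, βαβ⁻¹ = α¹³⟩` of order 160,
every subgroup of index 4 (equivalently, of order 40) contains `α⁴`, hence contains the
commutator subgroup `[G,G] = ⟨α⁴⟩`, and is therefore normal in `G`. -/
theorem subgroup_index_four_contains_commutator_and_normal
    (G : Type*) [Group G] (α β : G)
    (hgen : Subgroup.closure {α, β} = ⊤)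
    (hα : α ^ 40 = 1) (hβ : β ^ 4 = 1)
    (hrel : β * α * β⁻¹ = α ^ 13)
    (hcard : Nat.card G = 160) :
    ∀ H : Subgroup G, H.index = 4 →
      α ^ 4 ∈ H ∧ commutator G ≤ H ∧ H.Normal := by
  have hfin : Finite G := Nat.finite_of_card_ne_zero (by rw [hcard]; norm_num)
  -- reduction of powers of α modulo 40
  have hred : ∀ q r : ℕ, α ^ (40 * q + r) = α ^ r := by
    intro q r
    rw [pow_add, pow_mul, hα, one_pow, one_mul]
  -- conjugation formulas
  have hconj : ∀ k : ℕ, β * α ^ k * β⁻¹ = α ^ (13 * k) := by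
    intro k
    rw [← conj_pow, hrel, ← pow_mul]
  have hconjz : ∀ k : ℤ, β * α ^ k * β⁻¹ = α ^ (13 * k) := by
    intro k
    rw [← conj_zpow, hrel, ← zpow_natCast α 13, ← zpow_mul]
    norm_num
  have hβinv : β⁻¹ * α * β = α ^ 37 := by
    have h37 : β * α ^ 37 * β⁻¹ = α := by
      rw [hconj 37]
      exact (show α ^ (13 * 37) = α ^ (40 * 12 + 1) by norm_num).trans
        ((hred 12 1).trans (pow_one α))
    calc β⁻¹ * α * β = β⁻¹ * (β * α ^ 37 * β⁻¹) * β := by rw [h37]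
      _ = α ^ 37 := by group
  have hconjz' : ∀ k : ℤ, β⁻¹ * α ^ k * β = α ^ (37 * k) := by
    intro k
    have : β⁻¹ * α ^ k * β = (β⁻¹ * α * β⁻¹⁻¹) ^ k := by rw [conj_zpow, inv_inv]
    rw [this, inv_inv, hβinv, ← zpow_natCast α 37, ← zpow_mul]
    norm_num
  -- the subgroup generated by α is normal
  set A : Subgroup G := Subgroup.zpowers α with hA
  have hnormβA : β ∈ Subgroup.normalizer (A : Set G) := by
    rw [Subgroup.mem_normalizer_iff]
    intro h
    constructor
    · rintro ⟨k, rfl⟩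
      exact ⟨13 * k, (hconjz k).symm⟩
    · rintro ⟨k, hk⟩
      have hh : h = β⁻¹ * (β * h * β⁻¹) * β := by group
      rw [hh, ← hk, hconjz' k]
      exact ⟨37 * k, rfl⟩
  have hAnorm : A.Normal := by
    rw [← Subgroup.normalizer_eq_top_iff, eq_top_iff, ← hgen, Subgroup.closure_le]
    have h1 : α ∈ Subgroup.normalizer (A : Set G) := Subgroup.le_normalizer (Subgroup.mem_zpowers α)
    rintro x (rfl | rfl)
    · exact h1
    · exact hnormβA
  -- the order of α is 40 and A has index 4
  have hordα : orderOf α = 40 ∧ A.index = 4 := by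
    let π : G →* G ⧸ A := QuotientGroup.mk' A
    have hπα : π α = 1 := (QuotientGroup.eq_one_iff α).mpr (Subgroup.mem_zpowers α)
    have hQgen : Subgroup.closure ({π α, π β} : Set (G ⧸ A)) = ⊤ := by
      rw [← Set.image_pair, ← MonoidHom.map_closure, hgen, ← MonoidHom.range_eq_map,
        π.range_eq_top_of_surjective (QuotientGroup.mk'_surjective A)]
    have htop : Subgroup.zpowers (π β) = ⊤ := by
      rw [eq_top_iff, ← hQgen, Subgroup.closure_le]
      rintro x (rfl | rfl)
      · rw [hπα]; exact SetLike.mem_coe.mpr (one_mem _)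
      · exact Subgroup.mem_zpowers _
    have hidx : A.index ∣ 4 := by
      have h1 : A.index = Nat.card (G ⧸ A) := Subgroup.index_eq_card A
      have h2 : Nat.card (G ⧸ A) = orderOf (π β) := by
        rw [← Nat.card_zpowers, htop, Subgroup.card_top]
      have h3 : orderOf (π β) ∣ 4 := orderOf_dvd_of_pow_eq_one (by
        rw [← map_pow, hβ]; exact map_one π)
      rw [h1, h2]; exact h3
    have hcardA : Nat.card A * A.index = 160 := by rw [Subgroup.card_mul_index, hcard]
    have hcA : Nat.card A = orderOf α := Nat.card_zpowers α
    have hd40 : orderOf α ∣ 40 := orderOf_dvd_of_pow_eq_one hα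
    have hipos : 0 < A.index := Nat.pos_of_dvd_of_pos hidx (by norm_num)
    have hile : A.index ≤ 4 := Nat.le_of_dvd (by norm_num) hidx
    have hdle : orderOf α ≤ 40 := Nat.le_of_dvd (by norm_num) hd40
    have h40le : 40 ≤ orderOf α := by
      have hmul : 40 * A.index ≤ orderOf α * A.index := by
        calc 40 * A.index ≤ 40 * 4 := by omega
          _ = 160 := by norm_num
          _ = Nat.card A * A.index := hcardA.symm
          _ = orderOf α * A.index := by rw [hcA]
      exact Nat.le_of_mul_le_mul_right hmul hipos
    have hd : orderOf α = 40 := le_antisymm hdle h40le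
    refine ⟨hd, ?_⟩
    rw [hcA, hd] at hcardA
    omega
  obtain ⟨hord, hAidx⟩ := hordα
  -- α^8 and α^20 have orders 5 and 2
  have hord8 : orderOf (α ^ 8) = 5 := by
    have h5 : orderOf (α ^ 8) ∣ 5 := orderOf_dvd_of_pow_eq_one (by rw [← pow_mul]; exact hα)
    rcases (Nat.prime_five.eq_one_or_self_of_dvd _ h5) with h | h
    · exfalso
      have h1 : α ^ 8 = 1 := orderOf_eq_one_iff.mp h
      have h2 := orderOf_dvd_of_pow_eq_one h1
      rw [hord] at h2
      omega
    · exact h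
  have hord20 : orderOf (α ^ 20) = 2 := by
    have h2 : orderOf (α ^ 20) ∣ 2 := orderOf_dvd_of_pow_eq_one (by rw [← pow_mul]; exact hα)
    rcases (Nat.prime_two.eq_one_or_self_of_dvd _ h2) with h | h
    · exfalso
      have h1 : α ^ 20 = 1 := orderOf_eq_one_iff.mp h
      have h2' := orderOf_dvd_of_pow_eq_one h1
      rw [hord] at h2'
      omega
    · exact h
  -- the subgroup N = ⟨α⁴⟩ is normal
  set N : Subgroup G := Subgroup.zpowers (α ^ 4) with hN
  have hNconj : ∀ k : ℤ, β * (α ^ 4) ^ k * β⁻¹ = (α ^ 4) ^ (13 * k) := by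
    intro k
    have h1 : (α ^ 4 : G) ^ k = α ^ ((4 : ℤ) * k) := by
      rw [← zpow_natCast α 4, ← zpow_mul]; norm_num
    have h2 : (α ^ 4 : G) ^ ((13 : ℤ) * k) = α ^ ((4 : ℤ) * (13 * k)) := by
      rw [← zpow_natCast α 4, ← zpow_mul]; norm_num
    rw [h1, h2, hconjz (4 * k)]
    ring_nf
  have hNconj' : ∀ k : ℤ, β⁻¹ * (α ^ 4) ^ k * β = (α ^ 4) ^ (37 * k) := by
    intro k
    have h1 : (α ^ 4 : G) ^ k = α ^ ((4 : ℤ) * k) := by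
      rw [← zpow_natCast α 4, ← zpow_mul]; norm_num
    have h2 : (α ^ 4 : G) ^ ((37 : ℤ) * k) = α ^ ((4 : ℤ) * (37 * k)) := by
      rw [← zpow_natCast α 4, ← zpow_mul]; norm_num
    rw [h1, h2, hconjz' (4 * k)]
    ring_nf
  have hnormαN : α ∈ Subgroup.normalizer (N : Set G) := by
    rw [Subgroup.mem_normalizer_iff]
    intro h
    constructor
    · rintro ⟨k, rfl⟩
      refine ⟨k, ?_⟩
      have hc : Commute α ((α ^ 4) ^ k) := (Commute.pow_right (Commute.refl α) 4).zpow_right k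
      rw [hc.eq]; group
    · rintro ⟨k, hk⟩
      have hh : h = α⁻¹ * (α * h * α⁻¹) * α := by group
      rw [hh, ← hk]
      refine ⟨k, ?_⟩
      have hc : Commute α⁻¹ ((α ^ 4) ^ k) :=
        ((Commute.pow_right (Commute.refl α) 4).zpow_right k).inv_left
      rw [hc.eq]; group
  have hnormβN : β ∈ Subgroup.normalizer (N : Set G) := by
    rw [Subgroup.mem_normalizer_iff]
    intro h
    constructor
    · rintro ⟨k, rfl⟩
      exact ⟨13 * k, (hNconj k).symm⟩
    · rintro ⟨k, hk⟩
      have hh : h = β⁻¹ * (β * h * β⁻¹) * β := by group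
      rw [hh, ← hk, hNconj' k]
      exact ⟨37 * k, rfl⟩
  have hNnorm : N.Normal := by
    rw [← Subgroup.normalizer_eq_top_iff, eq_top_iff, ← hgen, Subgroup.closure_le]
    rintro x (rfl | rfl)
    · exact hnormαN
    · exact hnormβN
  -- the quotient G ⧸ N is abelian, so [G,G] ≤ N
  have hcommN : commutator G ≤ N := by
    let π : G →* G ⧸ N := QuotientGroup.mk' N
    have hQgen : Subgroup.closure ({π α, π β} : Set (G ⧸ N)) = ⊤ := by
      rw [← Set.image_pair, ← MonoidHom.map_closure, hgen, ← MonoidHom.range_eq_map,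
        π.range_eq_top_of_surjective (QuotientGroup.mk'_surjective N)]
    have hcommαβ : Commute (π α) (π β) := by
      have key : α * β * α ^ 4 = β * α := by
        have e : β * α ^ 4 * β⁻¹ = α ^ 52 := by
          rw [hconj 4]
        have e1 : α * β * α ^ 4 = α * (β * α ^ 4 * β⁻¹) * β := by group
        have e2 : (α : G) * α ^ 52 = α ^ 53 := by rw [← pow_succ']
        have e3 : (α : G) ^ 53 = α ^ 13 :=
          (show (α : G) ^ 53 = α ^ (40 * 1 + 13) by norm_num).trans (hred 1 13)
        have e4 : β * α = α ^ 13 * β := by rw [← hrel]; group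
        rw [e1, e, e2, e3, e4]
      have hππ : π (α * β) = π (β * α) :=
        (QuotientGroup.mk'_eq_mk' N).mpr ⟨α ^ 4, Subgroup.mem_zpowers _, key⟩
      have : π α * π β = π β * π α := by
        rw [← map_mul, ← map_mul, hππ]
      exact this
    have habQ : ∀ x y : G ⧸ N, Commute x y := by
      intro x y
      have hx : x ∈ Subgroup.closure ({π α, π β} : Set (G ⧸ N)) := by rw [hQgen]; trivial
      have hy : y ∈ Subgroup.closure ({π α, π β} : Set (G ⧸ N)) := by rw [hQgen]; trivial
      refine Subgroup.closure_induction₂ (p := fun a b _ _ => Commute a b) ?_ ?_ ?_ ?_ ?_ ?_ ?_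
        hx hy
      · rintro s t (rfl | rfl) (rfl | rfl)
        · exact Commute.refl _
        · exact hcommαβ
        · exact hcommαβ.symm
        · exact Commute.refl _
      · exact fun x _ => Commute.one_left x
      · exact fun x _ => Commute.one_right x
      · exact fun x y z _ _ _ h1 h2 => h1.mul_left h2
      · exact fun y z x _ _ _ h1 h2 => h1.mul_right h2
      · exact fun x y _ _ h => h.inv_left
      · exact fun x y _ _ h => h.inv_right
    rw [commutator_def]
    refine Subgroup.commutator_le.mpr fun g _ h _ => ?_
    have h1 : π ⁅g, h⁆ = 1 :=
      (map_commutatorElement π g h).trans (commutatorElement_eq_one_iff_commute.mpr (habQ _ _))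
    exact (QuotientGroup.eq_one_iff _).mp h1
  -- arithmetic helper
  have hkey' : ∀ n : ℕ, n ∣ 40 → 10 ≤ n → 5 ∣ n ∧ 2 ∣ n := by
    intro n h1 h2
    have h3 : n ≤ 40 := Nat.le_of_dvd (by norm_num) h1
    interval_cases n <;> omega
  -- main argument
  intro H hH
  set S : Subgroup G := H ⊓ A with hS
  have hScard_dvd : Nat.card S ∣ 40 := by
    have h := Subgroup.card_dvd_of_le (inf_le_right : S ≤ A)
    rwa [Nat.card_zpowers, hord] at h
  have hSidx : S.index ≤ 16 := by
    calc S.index ≤ H.index * A.index := Subgroup.index_inf_le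
      _ = 16 := by rw [hH, hAidx]
  have hSmul : Nat.card S * S.index = 160 := by rw [Subgroup.card_mul_index, hcard]
  have hS10 : 10 ≤ Nat.card S := by
    by_contra hcon
    push_neg at hcon
    have : Nat.card S * S.index ≤ 9 * 16 := Nat.mul_le_mul (by omega) hSidx
    omega
  have hkey : 5 ∣ Nat.card S ∧ 2 ∣ Nat.card S := hkey' _ hScard_dvd hS10
  -- Cauchy elements give α^8, α^20 ∈ S
  have hmem : ∀ (p e : ℕ), p.Prime → p ∣ Nat.card S → e * p = 40 → orderOf (α ^ e) = p →
      α ^ e ∈ S := by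
    intro p e hp hdvd hep hordp
    have : Fact p.Prime := ⟨hp⟩
    obtain ⟨a, ha⟩ := exists_prime_orderOf_dvd_card' (G := S) p hdvd
    have hx : orderOf (a : G) = p := by rw [Subgroup.orderOf_coe]; exact ha
    have hxS : (a : G) ∈ S := a.2
    obtain ⟨k, hk⟩ := Subgroup.mem_zpowers_iff.mp (hxS.2 : (a : G) ∈ A)
    have hpow : (α : G) ^ (k * (p : ℤ)) = 1 := by
      rw [zpow_mul, hk, zpow_natCast, ← hx, pow_orderOf_eq_one]
    have hdvd40 : (40 : ℤ) ∣ k * p := by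
      have h := orderOf_dvd_iff_zpow_eq_one.mpr hpow
      rwa [hord] at h
    have hke : (e : ℤ) ∣ k := by
      obtain ⟨m, hm⟩ := hdvd40
      have hp0 : (0 : ℤ) < p := by exact_mod_cast hp.pos
      have h40 : ((e : ℤ) * p) = 40 := by exact_mod_cast congrArg (Nat.cast (R := ℤ)) hep
      have heq : k * p = (e : ℤ) * m * p := by
        rw [hm, ← h40]; ring
      exact ⟨m, mul_right_cancel₀ (ne_of_gt hp0) heq⟩
    obtain ⟨m, hm⟩ := hke
    have hxmem : (a : G) ∈ Subgroup.zpowers (α ^ e) := by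
      rw [Subgroup.mem_zpowers_iff]
      refine ⟨m, ?_⟩
      rw [← hk, hm, ← zpow_natCast α e, ← zpow_mul]
    have hle : Subgroup.zpowers (a : G) ≤ Subgroup.zpowers (α ^ e) :=
      Subgroup.zpowers_le.mpr hxmem
    have heq : Subgroup.zpowers (a : G) = Subgroup.zpowers (α ^ e) := by
      refine Subgroup.eq_of_le_of_card_ge hle ?_
      rw [Nat.card_zpowers, Nat.card_zpowers, hx, hordp]
    have hfinal : α ^ e ∈ Subgroup.zpowers (a : G) := heq ▸ Subgroup.mem_zpowers _
    exact (Subgroup.zpowers_le.mpr hxS) hfinal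
  have h8 : α ^ 8 ∈ S := hmem 5 8 (by norm_num) hkey.1 (by norm_num) hord8
  have h20 : α ^ 20 ∈ S := hmem 2 20 (by norm_num) hkey.2 (by norm_num) hord20
  have hα4 : α ^ 4 ∈ H := by
    have hid : (α : G) ^ 4 = (α ^ 8) ^ 3 * (α ^ 20)⁻¹ := by group
    rw [hid]
    exact H.mul_mem (H.pow_mem h8.1 3) (H.inv_mem h20.1)
  refine ⟨hα4, hcommN.trans (Subgroup.zpowers_le.mpr hα4), ?_⟩
  constructor
  intro n hn g
  have hgn : g * n * g⁻¹ = ⁅g, n⁆ * n := by group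
  rw [hgn]
  refine H.mul_mem ?_ hn
  have hcm : ⁅g, n⁆ ∈ commutator G := by
    rw [commutator_def]
    exact Subgroup.commutator_mem_commutator (Subgroup.mem_top g) (Subgroup.mem_top n)
  exact (hcommN.trans (Subgroup.zpowers_le.mpr hα4)) hcm
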